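/- Consider the signed network coordination game on a network (V, W) with external field h and a partition V = R ∪ S (R, S disjoint) with W_ij ≥ 0 for all i, j ∈ R. Let h^+, h^− ∈ ℝ^R be defined by h^+_i = h_i + w_i^S and h^−_i = h_i − w_i^S for i ∈ R. Assume the subnetwork (R, W_{RR}) is (h^−, h^+)-indecomposable and w_i^R − |h_i| > w_i^S for every i ∈ R. If for each a ∈ {−1, +1} the set N_S^(a𝟏) of Nash equilibria of the S-restricted game with the strategy profile of players in R frozen to the constant profile a𝟏 is globally BR-reachable for that restricted game, then the set Ñ = { x* ∈ N : x*_R is a constant profile (all +1 or all −1) } of Nash equilibria of the SNC game is nonempty and globally BR-reachable. -/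

import Mathlib

open Finset Function

noncomputable section

/-- The binary action set `A = {−1, +1}`, as a subtype of `ℝ`. -/
abbrev Act : Type := {r : ℝ // r = 1 ∨ r = -1}

def onePt : Act := ⟨1, Or.inl rfl⟩

def negOnePt : Act := ⟨-1, Or.inr rfl⟩

def actMul (a b : Act) : Act :=
  ⟨(a : ℝ) * (b : ℝ), by rcases a.2 with h1 | h1 <;> rcases b.2 with h2 | h2 <;> norm_num [h1, h2]⟩

def actNeg (a : Act) : Act :=
  ⟨-(a : ℝ), by rcases a.2 with h1 | h1 <;> norm_num [h1]⟩

/-- Utility of player `i` in the SNC game on the network `(V, W)` with external field `h`. -/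
def utility {V : Type*} [Fintype V] (W : V → V → ℝ) (h : V → ℝ) (i : V) (x : V → Act) : ℝ :=
  h i * (x i : ℝ) + (x i : ℝ) * ∑ j, W i j * (x j : ℝ)

/-- Best response set of player `i` (depends only on `x_{−i}`). -/
def bestResponse {V : Type*} [Fintype V] [DecidableEq V] (W : V → V → ℝ) (h : V → ℝ)
    (i : V) (x : V → Act) : Set Act :=
  {a | ∀ b : Act, utility W h i (Function.update x i b) ≤ utility W h i (Function.update x i a)}

/-- Nash equilibrium of the SNC game. -/
def IsNash {V : Type*} [Fintype V] [DecidableEq V] (W : V → V → ℝ) (h : V → ℝ)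
    (x : V → Act) : Prop :=
  ∀ i, x i ∈ bestResponse W h i x

/-- One step of a best-response path. -/
def BRStep {V : Type*} [Fintype V] [DecidableEq V] (W : V → V → ℝ) (h : V → ℝ)
    (x y : V → Act) : Prop :=
  ∃ i, (∀ j, j ≠ i → y j = x j) ∧ y i ≠ x i ∧ y i ∈ bestResponse W h i x

def GloballyBRReachable {V : Type*} [Fintype V] [DecidableEq V] (W : V → V → ℝ) (h : V → ℝ)
    (X : Set (V → Act)) : Prop :=
  ∀ x : V → Act, ∃ y ∈ X, Relation.ReflTransGen (BRStep W h) x y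

def BRInvariant {V : Type*} [Fintype V] [DecidableEq V] (W : V → V → ℝ) (h : V → ℝ)
    (X : Set (V → Act)) : Prop :=
  ∀ x ∈ X, ∀ y, Relation.ReflTransGen (BRStep W h) x y → y ∈ X

def GloballyBRStable {V : Type*} [Fintype V] [DecidableEq V] (W : V → V → ℝ) (h : V → ℝ)
    (X : Set (V → Act)) : Prop :=
  GloballyBRReachable W h X ∧ BRInvariant W h X

/-- Structural balance of a signed weight matrix. -/
def StructurallyBalanced {V : Type*} (W : V → V → ℝ) : Prop :=
  ∃ P : Set V, (∀ i j, (i ∈ P ↔ j ∈ P) → 0 ≤ W i j) ∧ (∀ i j, ¬(i ∈ P ↔ j ∈ P) → W i j ≤ 0)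

/-- `(h^−, h^+)`-indecomposability of a network. -/
def Indecomposable {V : Type*} [Fintype V] [DecidableEq V] (W : V → V → ℝ)
    (hm hp : V → ℝ) : Prop :=
  ∀ P M : Finset V, P ∪ M = Finset.univ → Disjoint P M → P.Nonempty → M.Nonempty →
    (∃ i ∈ P, ∑ j ∈ P, |W i j| + hp i < ∑ j ∈ M, |W i j|) ∨
    (∃ i ∈ M, (∑ j ∈ M, |W i j|) - hm i < ∑ j ∈ P, |W i j|)

open scoped Classical

section Aux

variable {V : Type*} [Fintype V] [DecidableEq V]

lemma act_cases (a : Act) : a = onePt ∨ a = negOnePt := by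
  rcases a.2 with h | h
  · exact Or.inl (Subtype.ext h)
  · exact Or.inr (Subtype.ext h)

@[simp] lemma onePt_val : ((onePt : Act) : ℝ) = 1 := rfl
@[simp] lemma negOnePt_val : ((negOnePt : Act) : ℝ) = -1 := rfl

lemma val_of_ne_onePt {a : Act} (h : a ≠ onePt) : (a : ℝ) = -1 := by
  rcases act_cases a with h1 | h1
  · exact absurd h1 h
  · rw [h1]; rfl

lemma act_abs (a : Act) : |(a : ℝ)| = 1 := by
  rcases a.2 with h | h <;> rw [h] <;> norm_num

/-- Effective field plus neighborhood sum. -/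
def Kfun (W : V → V → ℝ) (h : V → ℝ) (i : V) (x : V → Act) : ℝ :=
  h i + ∑ j, W i j * (x j : ℝ)

lemma utility_update_eq (W : V → V → ℝ) (h : V → ℝ) (hdiag : ∀ i, W i i = 0)
    (i : V) (x : V → Act) (b : Act) :
    utility W h i (Function.update x i b) = (b : ℝ) * Kfun W h i x := by
  unfold utility Kfun
  have hs : ∑ j, W i j * ((Function.update x i b j : Act) : ℝ) = ∑ j, W i j * (x j : ℝ) := by
    refine Finset.sum_congr rfl fun j _ => ?_
    by_cases hj : j = i
    · subst hj; simp [hdiag]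
    · rw [Function.update_of_ne hj]
  rw [hs, Function.update_self]; ring

lemma mem_br_iff (W : V → V → ℝ) (h : V → ℝ) (hdiag : ∀ i, W i i = 0)
    (i : V) (x : V → Act) (a : Act) :
    a ∈ bestResponse W h i x ↔ 0 ≤ (a : ℝ) * Kfun W h i x := by
  unfold bestResponse
  simp only [Set.mem_setOf_eq, utility_update_eq W h hdiag]
  constructor
  · intro H
    rcases act_cases a with ha | ha
    · subst ha; have := H negOnePt
      simp only [onePt_val, negOnePt_val] at this ⊢; nlinarith
    · subst ha; have := H onePt
      simp only [onePt_val, negOnePt_val] at this ⊢; nlinarith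
  · intro H b
    rcases act_cases a with ha | ha <;> subst ha <;>
      rcases act_cases b with hb | hb <;> subst hb <;>
      simp only [onePt_val, negOnePt_val] at H ⊢ <;> nlinarith

lemma brStep_update (W : V → V → ℝ) (h : V → ℝ)
    (i : V) (x : V → Act) (a : Act) (hne : a ≠ x i) (hbr : a ∈ bestResponse W h i x) :
    BRStep W h x (Function.update x i a) :=
  ⟨i, fun j hj => Function.update_of_ne hj _ _, by simpa using hne, by
    simpa [Function.update_self] using hbr⟩

lemma Kfun_update (W : V → V → ℝ) (h : V → ℝ) (j i : V) (x : V → Act) (a : Act) :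
    Kfun W h j (Function.update x i a) = Kfun W h j x + W j i * ((a : ℝ) - (x i : ℝ)) := by
  unfold Kfun
  have hs : ∀ k, W j k * ((Function.update x i a k : Act) : ℝ)
      = W j k * (x k : ℝ) + (if k = i then W j i * ((a : ℝ) - (x i : ℝ)) else 0) := by
    intro k
    by_cases hk : k = i
    · subst hk; rw [Function.update_self]; simp; ring
    · rw [Function.update_of_ne hk]; simp [hk]
  simp only [hs, Finset.sum_add_distrib, Finset.sum_ite_eq' Finset.univ i,
    Finset.mem_univ, if_pos]
  ring

end Aux

section Phases

variable {V : Type*} [Fintype V] [DecidableEq V]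

lemma onePt_ne_negOnePt : (onePt : Act) ≠ negOnePt := by
  intro hcon
  have : ((onePt : Act) : ℝ) = ((negOnePt : Act) : ℝ) := by rw [hcon]
  norm_num at this

lemma negOnePt_ne_onePt : (negOnePt : Act) ≠ onePt := fun hc => onePt_ne_negOnePt hc.symm

lemma ne_onePt_of_eq_negOnePt {a : Act} (ha : a ≠ onePt) : (a : ℝ) = -1 :=
  val_of_ne_onePt ha

/-- Phase 1: flip unhappy `+1` players in `R` down until all `+1` players in `R` are happy. -/
lemma phase1 (W : V → V → ℝ) (h : V → ℝ) (hdiag : ∀ i, W i i = 0) (R : Finset V) :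
    ∀ n : ℕ, ∀ x : V → Act, (R.filter (fun i => x i = onePt)).card ≤ n →
    ∃ y : V → Act, Relation.ReflTransGen (BRStep W h) x y ∧
      (∀ i ∈ R, y i = onePt → 0 ≤ Kfun W h i y) := by
  intro n
  induction n with
  | zero =>
    intro x hx
    have hemp : R.filter (fun i => x i = onePt) = ∅ :=
      Finset.card_eq_zero.mp (Nat.le_zero.mp hx)
    refine ⟨x, Relation.ReflTransGen.refl, fun i hi hone => ?_⟩
    exfalso
    have : i ∈ R.filter (fun i => x i = onePt) := Finset.mem_filter.mpr ⟨hi, hone⟩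
    simp [hemp] at this
  | succ n IH =>
    intro x hx
    by_cases hex : ∃ i ∈ R, x i = onePt ∧ Kfun W h i x < 0
    · obtain ⟨i, hiR, hxi, hKi⟩ := hex
      have hbr : negOnePt ∈ bestResponse W h i x := by
        rw [mem_br_iff W h hdiag]
        simp only [negOnePt_val]
        nlinarith
      have hne : negOnePt ≠ x i := by rw [hxi]; exact fun hc => onePt_ne_negOnePt hc.symm
      set x' := Function.update x i negOnePt with hx'
      have hstep : BRStep W h x x' := brStep_update W h i x negOnePt hne hbr
      have hfil : R.filter (fun j => x' j = onePt)
          = (R.filter (fun j => x j = onePt)).erase i := by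
        ext j
        simp only [Finset.mem_filter, Finset.mem_erase, hx']
        by_cases hj : j = i
        · subst hj
          simp [Function.update_self, negOnePt_ne_onePt]
        · simp [Function.update_of_ne hj, hj]
      have hil : i ∈ R.filter (fun j => x j = onePt) := Finset.mem_filter.mpr ⟨hiR, hxi⟩
      have hcard : (R.filter (fun j => x' j = onePt)).card ≤ n := by
        rw [hfil, Finset.card_erase_of_mem hil]
        omega
      obtain ⟨y, hpath, hend⟩ := IH x' hcard
      exact ⟨y, Relation.ReflTransGen.head hstep hpath, hend⟩
    · push_neg at hex
      exact ⟨x, Relation.ReflTransGen.refl, fun i hi hone => hex i hi hone⟩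

/-- Phase 2: flip weakly-happy-to-be-`+1` players in `R` up; the happiness of `+1` players
is preserved since weights within `R` are nonnegative. -/
lemma phase2 (W : V → V → ℝ) (h : V → ℝ) (hdiag : ∀ i, W i i = 0) (R : Finset V)
    (hRpos : ∀ i ∈ R, ∀ j ∈ R, 0 ≤ W i j) :
    ∀ n : ℕ, ∀ x : V → Act, (R.filter (fun i => x i ≠ onePt)).card ≤ n →
      (∀ i ∈ R, x i = onePt → 0 ≤ Kfun W h i x) →
      ∃ y : V → Act, Relation.ReflTransGen (BRStep W h) x y ∧
        (∀ i ∈ R, y i = onePt → 0 ≤ Kfun W h i y) ∧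
        (∀ i ∈ R, y i ≠ onePt → Kfun W h i y < 0) := by
  intro n
  induction n with
  | zero =>
    intro x hx hinv
    have hemp : R.filter (fun i => x i ≠ onePt) = ∅ :=
      Finset.card_eq_zero.mp (Nat.le_zero.mp hx)
    refine ⟨x, Relation.ReflTransGen.refl, hinv, fun i hi hne => ?_⟩
    exfalso
    have : i ∈ R.filter (fun i => x i ≠ onePt) := Finset.mem_filter.mpr ⟨hi, hne⟩
    simp [hemp] at this
  | succ n IH =>
    intro x hx hinv
    by_cases hex : ∃ i ∈ R, x i ≠ onePt ∧ 0 ≤ Kfun W h i x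
    · obtain ⟨i, hiR, hxi, hKi⟩ := hex
      have hbr : onePt ∈ bestResponse W h i x := by
        rw [mem_br_iff W h hdiag]
        simp only [onePt_val]
        nlinarith
      have hne : onePt ≠ x i := fun hc => hxi hc.symm
      set x' := Function.update x i onePt with hx'
      have hstep : BRStep W h x x' := brStep_update W h i x onePt hne hbr
      have hxival : ((x i : Act) : ℝ) = -1 := val_of_ne_onePt hxi
      have hinv' : ∀ j ∈ R, x' j = onePt → 0 ≤ Kfun W h j x' := by
        intro j hjR hj1
        have hKupd : Kfun W h j x' = Kfun W h j x + W j i * (1 - (x i : ℝ)) := by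
          rw [hx', Kfun_update]; norm_num
        by_cases hj : j = i
        · subst hj
          rw [hKupd, hdiag]
          linarith
        · have hxj : x j = onePt := by
            have := hj1
            rwa [hx', Function.update_of_ne hj] at this
          have h0 : 0 ≤ Kfun W h j x := hinv j hjR hxj
          have hW : 0 ≤ W j i := hRpos j hjR i hiR
          rw [hKupd, hxival]
          nlinarith
      have hfil : R.filter (fun j => x' j ≠ onePt)
          = (R.filter (fun j => x j ≠ onePt)).erase i := by
        ext j
        simp only [Finset.mem_filter, Finset.mem_erase, hx']
        by_cases hj : j = i
        · subst hj
          simp [Function.update_self]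
        · simp [Function.update_of_ne hj, hj]
      have hil : i ∈ R.filter (fun j => x j ≠ onePt) := Finset.mem_filter.mpr ⟨hiR, hxi⟩
      have hcard : (R.filter (fun j => x' j ≠ onePt)).card ≤ n := by
        rw [hfil, Finset.card_erase_of_mem hil]
        omega
      obtain ⟨y, hpath, hend1, hend2⟩ := IH x' hcard hinv'
      exact ⟨y, Relation.ReflTransGen.head hstep hpath, hend1, hend2⟩
    · push_neg at hex
      exact ⟨x, Relation.ReflTransGen.refl, hinv, fun i hi hne => hex i hi hne⟩

end Phases

section Sums

variable {V : Type*} [Fintype V] [DecidableEq V]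

lemma sum_subtype_filter (R : Finset V) (p : V → Prop) [DecidablePred p] (f : V → ℝ) :
    ∑ j ∈ Finset.univ.filter (fun j : {i // i ∈ R} => p j.1), f j.1
      = ∑ j ∈ R.filter p, f j := by
  rw [Finset.sum_filter, Finset.sum_filter, Finset.univ_eq_attach,
    ← Finset.sum_attach R (fun j => if p j then f j else 0)]

lemma sum_subtype_univ (Sf : Finset V) (f : V → ℝ) :
    ∑ j : {i // i ∈ Sf}, f j.1 = ∑ j ∈ Sf, f j := by
  rw [Finset.univ_eq_attach]
  exact Finset.sum_attach Sf f

end Sums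

theorem stmt13 {V : Type*} [Fintype V] [DecidableEq V] [Nonempty V]
    (W : V → V → ℝ) (h : V → ℝ) (hdiag : ∀ i, W i i = 0)
    (R S : Finset V) (hUnion : R ∪ S = Finset.univ) (hDisj : Disjoint R S)
    (hRpos : ∀ i ∈ R, ∀ j ∈ R, 0 ≤ W i j)
    (hind : Indecomposable (fun i j : {i // i ∈ R} => W i.1 j.1)
      (fun i : {i // i ∈ R} => h i.1 - ∑ j ∈ S, |W i.1 j|)
      (fun i : {i // i ∈ R} => h i.1 + ∑ j ∈ S, |W i.1 j|))
    (hdeg : ∀ i ∈ R, ∑ j ∈ S, |W i j| < (∑ j ∈ R, |W i j|) - |h i|)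
    (hreach : ∀ a : Act, GloballyBRReachable (fun i j : {i // i ∈ S} => W i.1 j.1)
      (fun i : {i // i ∈ S} => h i.1 + ∑ j ∈ R, W i.1 j * (a : ℝ))
      {z : {i // i ∈ S} → Act | IsNash (fun i j : {i // i ∈ S} => W i.1 j.1)
        (fun i : {i // i ∈ S} => h i.1 + ∑ j ∈ R, W i.1 j * (a : ℝ)) z}) :
    ({x : V → Act | IsNash W h x ∧
        ((∀ i ∈ R, x i = onePt) ∨ (∀ i ∈ R, x i = negOnePt))}).Nonempty ∧
    GloballyBRReachable W h
      {x : V → Act | IsNash W h x ∧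
        ((∀ i ∈ R, x i = onePt) ∨ (∀ i ∈ R, x i = negOnePt))} := by
  classical
  have hmem : ∀ j : V, j ∈ R ∨ j ∈ S := by
    intro j
    have : j ∈ R ∪ S := by rw [hUnion]; exact Finset.mem_univ j
    exact Finset.mem_union.mp this
  have hnotS : ∀ j ∈ R, j ∉ S := fun j hj => Finset.disjoint_left.mp hDisj hj
  have hsplit : ∀ f : V → ℝ, ∑ j, f j = ∑ j ∈ R, f j + ∑ j ∈ S, f j := by
    intro f; rw [← Finset.sum_union hDisj, hUnion]
  -- bound on the S-part of the neighborhood sum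
  have hSabs : ∀ (i : V) (x : V → Act), |∑ j ∈ S, W i j * ((x j : Act) : ℝ)| ≤ ∑ j ∈ S, |W i j| := by
    intro i x
    calc |∑ j ∈ S, W i j * ((x j : Act) : ℝ)| ≤ ∑ j ∈ S, |W i j * ((x j : Act) : ℝ)| :=
          Finset.abs_sum_le_sum_abs _ _
      _ = ∑ j ∈ S, |W i j| := by
          refine Finset.sum_congr rfl fun j _ => ?_
          rw [abs_mul, act_abs, mul_one]
  have main : GloballyBRReachable W h {x : V → Act | IsNash W h x ∧
      ((∀ i ∈ R, x i = onePt) ∨ (∀ i ∈ R, x i = negOnePt))} := by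
    intro x0
    obtain ⟨x1, hp1, hinv1⟩ :=
      phase1 W h hdiag R (R.filter (fun i => x0 i = onePt)).card x0 le_rfl
    obtain ⟨x2, hp2, hgood, hbad⟩ :=
      phase2 W h hdiag R hRpos (R.filter (fun i => x1 i ≠ onePt)).card x1 le_rfl hinv1
    -- consensus on R at x2
    have hcons : (∀ i ∈ R, x2 i = onePt) ∨ (∀ i ∈ R, x2 i = negOnePt) := by
      by_contra hnc
      push_neg at hnc
      obtain ⟨⟨i1, hi1R, hi1⟩, ⟨i2, hi2R, hi2⟩⟩ := hnc
      have hi1' : x2 i1 ≠ onePt := hi1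
      have hi2' : x2 i2 = onePt := by
        rcases act_cases (x2 i2) with hc | hc
        · exact hc
        · exact absurd hc hi2
      set P : Finset {i // i ∈ R} := Finset.univ.filter (fun j => x2 j.1 = onePt) with hP
      set M : Finset {i // i ∈ R} := Finset.univ.filter (fun j => ¬ x2 j.1 = onePt) with hM
      have hPM : P ∪ M = Finset.univ := Finset.filter_union_filter_not_eq _ _
      have hPMd : Disjoint P M := Finset.disjoint_filter_filter_not _ _ _
      have hPne : P.Nonempty := ⟨⟨i2, hi2R⟩, Finset.mem_filter.mpr ⟨Finset.mem_univ _, hi2'⟩⟩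
      have hMne : M.Nonempty := ⟨⟨i1, hi1R⟩, Finset.mem_filter.mpr ⟨Finset.mem_univ _, hi1'⟩⟩
      -- neighborhood sum over R in terms of P and M
      have hRsum : ∀ i ∈ R, ∑ j ∈ R, W i j * ((x2 j : Act) : ℝ)
          = ∑ j ∈ R.filter (fun v => x2 v = onePt), |W i j|
            - ∑ j ∈ R.filter (fun v => ¬ x2 v = onePt), |W i j| := by
        intro i hiR
        rw [← Finset.sum_filter_add_sum_filter_not R (fun v => x2 v = onePt)
          (fun j => W i j * ((x2 j : Act) : ℝ))]
        have e1 : ∑ j ∈ R.filter (fun v => x2 v = onePt), W i j * ((x2 j : Act) : ℝ)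
            = ∑ j ∈ R.filter (fun v => x2 v = onePt), |W i j| := by
          refine Finset.sum_congr rfl fun j hj => ?_
          obtain ⟨hjR, hj1⟩ := Finset.mem_filter.mp hj
          rw [hj1, onePt_val, mul_one, abs_of_nonneg (hRpos i hiR j hjR)]
        have e2 : ∑ j ∈ R.filter (fun v => ¬ x2 v = onePt), W i j * ((x2 j : Act) : ℝ)
            = -∑ j ∈ R.filter (fun v => ¬ x2 v = onePt), |W i j| := by
          rw [← Finset.sum_neg_distrib]
          refine Finset.sum_congr rfl fun j hj => ?_
          obtain ⟨hjR, hj1⟩ := Finset.mem_filter.mp hj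
          rw [val_of_ne_onePt hj1, abs_of_nonneg (hRpos i hiR j hjR)]
          ring
        rw [e1, e2]
        ring
      rcases hind P M hPM hPMd hPne hMne with ⟨i, hiP, hlt⟩ | ⟨i, hiM, hlt⟩
      · have hi1 : x2 i.1 = onePt := (Finset.mem_filter.mp hiP).2
        have hKge : 0 ≤ Kfun W h i.1 x2 := hgood i.1 i.2 hi1
        have hsP : ∑ j ∈ P, |W i.1 j.1| = ∑ j ∈ R.filter (fun v => x2 v = onePt), |W i.1 j| :=
          sum_subtype_filter R (fun v => x2 v = onePt) (fun j => |W i.1 j|)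
        have hsM : ∑ j ∈ M, |W i.1 j.1| = ∑ j ∈ R.filter (fun v => ¬ x2 v = onePt), |W i.1 j| :=
          sum_subtype_filter R (fun v => ¬ x2 v = onePt) (fun j => |W i.1 j|)
        simp only [] at hlt
        rw [hsP, hsM] at hlt
        have hKeq : Kfun W h i.1 x2 = h i.1
            + (∑ j ∈ R.filter (fun v => x2 v = onePt), |W i.1 j|
              - ∑ j ∈ R.filter (fun v => ¬ x2 v = onePt), |W i.1 j|)
            + ∑ j ∈ S, W i.1 j * ((x2 j : Act) : ℝ) := by
          unfold Kfun
          rw [hsplit (fun j => W i.1 j * ((x2 j : Act) : ℝ)), hRsum i.1 i.2]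
          ring
        have hSb := abs_le.mp (hSabs i.1 x2)
        rw [hKeq] at hKge
        linarith [hSb.2]
      · have hi1 : ¬ x2 i.1 = onePt := (Finset.mem_filter.mp hiM).2
        have hKlt : Kfun W h i.1 x2 < 0 := hbad i.1 i.2 hi1
        have hsP : ∑ j ∈ P, |W i.1 j.1| = ∑ j ∈ R.filter (fun v => x2 v = onePt), |W i.1 j| :=
          sum_subtype_filter R (fun v => x2 v = onePt) (fun j => |W i.1 j|)
        have hsM : ∑ j ∈ M, |W i.1 j.1| = ∑ j ∈ R.filter (fun v => ¬ x2 v = onePt), |W i.1 j| :=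
          sum_subtype_filter R (fun v => ¬ x2 v = onePt) (fun j => |W i.1 j|)
        simp only [] at hlt
        rw [hsP, hsM] at hlt
        have hKeq : Kfun W h i.1 x2 = h i.1
            + (∑ j ∈ R.filter (fun v => x2 v = onePt), |W i.1 j|
              - ∑ j ∈ R.filter (fun v => ¬ x2 v = onePt), |W i.1 j|)
            + ∑ j ∈ S, W i.1 j * ((x2 j : Act) : ℝ) := by
          unfold Kfun
          rw [hsplit (fun j => W i.1 j * ((x2 j : Act) : ℝ)), hRsum i.1 i.2]
          ring
        have hSb := abs_le.mp (hSabs i.1 x2)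
        rw [hKeq] at hKlt
        linarith [hSb.1]
    obtain ⟨a, ha⟩ : ∃ a : Act, ∀ i ∈ R, x2 i = a := by
      rcases hcons with hc | hc
      exacts [⟨onePt, hc⟩, ⟨negOnePt, hc⟩]
    -- the S-restricted game
    set WS : {i // i ∈ S} → {i // i ∈ S} → ℝ := fun i j => W i.1 j.1 with hWS
    set hS : {i // i ∈ S} → ℝ := fun i => h i.1 + ∑ j ∈ R, W i.1 j * (a : ℝ) with hhS
    have hdiagS : ∀ i : {i // i ∈ S}, WS i i = 0 := fun i => hdiag i.1
    set lift : ({i // i ∈ S} → Act) → (V → Act) :=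
      fun z j => if hj : j ∈ S then z ⟨j, hj⟩ else x2 j with hlift
    have hliftS : ∀ (z : {i // i ∈ S} → Act) (j : {i // i ∈ S}), lift z j.1 = z j := by
      intro z j
      simp only [hlift, dif_pos j.2]
    have hliftR : ∀ (z : {i // i ∈ S} → Act) (j : V), j ∈ R → lift z j = a := by
      intro z j hj
      simp only [hlift, dif_neg (hnotS j hj)]
      exact ha j hj
    have hK : ∀ (z : {i // i ∈ S} → Act) (i : {i // i ∈ S}),
        Kfun W h i.1 (lift z) = Kfun WS hS i z := by
      intro z i
      unfold Kfun
      rw [hsplit (fun j => W i.1 j * ((lift z j : Act) : ℝ))]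
      have h1 : ∑ j ∈ R, W i.1 j * ((lift z j : Act) : ℝ) = ∑ j ∈ R, W i.1 j * (a : ℝ) :=
        Finset.sum_congr rfl fun j hj => by rw [hliftR z j hj]
      have h2 : ∑ j ∈ S, W i.1 j * ((lift z j : Act) : ℝ) = ∑ j, WS i j * ((z j : Act) : ℝ) := by
        rw [← sum_subtype_univ S (fun j => W i.1 j * ((lift z j : Act) : ℝ))]
        exact Finset.sum_congr rfl fun j _ => by rw [hliftS z j]
      rw [h1, h2, hhS]
      ring
    have hBR : ∀ (z : {i // i ∈ S} → Act) (i : {i // i ∈ S}) (b : Act),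
        b ∈ bestResponse WS hS i z ↔ b ∈ bestResponse W h i.1 (lift z) := by
      intro z i b
      rw [mem_br_iff WS hS hdiagS, mem_br_iff W h hdiag, hK]
    have hstepmap : ∀ z z', BRStep WS hS z z' → BRStep W h (lift z) (lift z') := by
      rintro z z' ⟨i, hoff, hne, hbr⟩
      refine ⟨i.1, ?_, ?_, ?_⟩
      · intro j hj
        by_cases hjS : j ∈ S
        · have hji : (⟨j, hjS⟩ : {i // i ∈ S}) ≠ i := fun hc => hj (congrArg Subtype.val hc)
          have e1 := hliftS z' ⟨j, hjS⟩
          have e2 := hliftS z ⟨j, hjS⟩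
          rw [e1, e2]
          exact hoff _ hji
        · simp only [hlift, dif_neg hjS]
      · rw [hliftS z' i, hliftS z i]
        exact hne
      · rw [hliftS z' i]
        exact (hBR z i (z' i)).mp hbr
    obtain ⟨z, hzNash, hzpath⟩ := hreach a (fun j : {i // i ∈ S} => x2 j.1)
    have hstart : lift (fun j : {i // i ∈ S} => x2 j.1) = x2 := by
      funext j
      by_cases hj : j ∈ S <;> simp [hlift, hj]
    have hpathS : Relation.ReflTransGen (BRStep W h) x2 (lift z) := by
      have : Relation.ReflTransGen (BRStep W h) (lift (fun j : {i // i ∈ S} => x2 j.1)) (lift z) :=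
        Relation.ReflTransGen.lift lift hstepmap _ _ hzpath
      rwa [hstart] at this
    have hNash : IsNash W h (lift z) := by
      intro i
      rcases hmem i with hiR | hiS
      · have hxa : lift z i = a := hliftR z i hiR
        rw [hxa, mem_br_iff W h hdiag]
        have hKsplit : Kfun W h i (lift z) = h i + ∑ j ∈ R, W i j * ((lift z j : Act) : ℝ)
            + ∑ j ∈ S, W i j * ((lift z j : Act) : ℝ) := by
          unfold Kfun
          rw [hsplit (fun j => W i j * ((lift z j : Act) : ℝ))]
          ring
        have hRterm : (a : ℝ) * ∑ j ∈ R, W i j * ((lift z j : Act) : ℝ) = ∑ j ∈ R, |W i j| := by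
          rw [Finset.mul_sum]
          refine Finset.sum_congr rfl fun j hj => ?_
          rw [hliftR z j hj, abs_of_nonneg (hRpos i hiR j hj)]
          rcases a.2 with hA | hA <;> rw [hA] <;> ring
        have hhterm : -|h i| ≤ (a : ℝ) * h i := by
          have habs : |(a : ℝ) * h i| = |h i| := by rw [abs_mul, act_abs, one_mul]
          calc -|h i| = -|(a : ℝ) * h i| := by rw [habs]
            _ ≤ (a : ℝ) * h i := neg_abs_le _
        have hSterm : -∑ j ∈ S, |W i j| ≤ (a : ℝ) * ∑ j ∈ S, W i j * ((lift z j : Act) : ℝ) := by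
          have habs : |(a : ℝ) * ∑ j ∈ S, W i j * ((lift z j : Act) : ℝ)|
              ≤ ∑ j ∈ S, |W i j| := by
            rw [abs_mul, act_abs, one_mul]
            exact hSabs i (lift z)
          linarith [neg_abs_le ((a : ℝ) * ∑ j ∈ S, W i j * ((lift z j : Act) : ℝ)),
            (abs_le.mp habs).1]
        have hd := hdeg i hiR
        rw [hKsplit]
        have expand : (a : ℝ) * (h i + ∑ j ∈ R, W i j * ((lift z j : Act) : ℝ)
            + ∑ j ∈ S, W i j * ((lift z j : Act) : ℝ))
            = (a : ℝ) * h i + (a : ℝ) * ∑ j ∈ R, W i j * ((lift z j : Act) : ℝ)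
              + (a : ℝ) * ∑ j ∈ S, W i j * ((lift z j : Act) : ℝ) := by ring
        rw [expand, hRterm]
        linarith
      · have hi' : lift z i = z ⟨i, hiS⟩ := hliftS z ⟨i, hiS⟩
        rw [hi']
        exact (hBR z ⟨i, hiS⟩ (z ⟨i, hiS⟩)).mp (hzNash ⟨i, hiS⟩)
    exact ⟨lift z, ⟨hNash, by
      rcases act_cases a with hA | hA
      · exact Or.inl fun i hi => by rw [hliftR z i hi, hA]
      · exact Or.inr fun i hi => by rw [hliftR z i hi, hA]⟩,
      (hp1.trans hp2).trans hpathS⟩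
  refine ⟨?_, main⟩
  obtain ⟨y, hy, _⟩ := main (fun _ => onePt)
  exact ⟨y, hy⟩
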